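/- Let L be a finite complemented modular lattice with height function hgt, and let C be the set of circuits of a ℤ-latroid (ρ, hgt, L). If C1, C2 ∈ C are distinct and M ≤ C1 ∨ C2 with hgt(M) = hgt(C1 ∨ C2) − 1, then there exists C3 ∈ C with C3 ≤ M. -/

import Mathlib

/-- Circuit elimination for `ℤ`-latroids: if `C1 ≠ C2` are circuits and
`M ≤ C1 ⊔ C2` with `hgt M = hgt (C1 ⊔ C2) - 1`, then some circuit `C3 ≤ M`. -/
theorem latroid_circuit_elimination
    {L : Type*} [Lattice L] [BoundedOrder L] [Fintype L]
    [IsModularLattice L] [ComplementedLattice L]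
    (hgt : L → ℤ) (hgt_bot : hgt ⊥ = 0)
    (hgt_cov : ∀ a b : L, a ⋖ b → hgt b = hgt a + 1)
    (ρ : L → ℤ) (hρ_bot : ρ ⊥ = 0)
    (hsub : ∀ a b : L, ρ (a ⊔ b) + ρ (a ⊓ b) ≤ ρ a + ρ b)
    (hbi : ∀ a b : L, a ≤ b → 0 ≤ ρ b - ρ a ∧ ρ b - ρ a ≤ hgt b - hgt a)
    (C1 C2 M : L)
    (hC1 : ρ C1 < hgt C1 ∧ ∀ L' : L, L' < C1 → ρ L' = hgt L')
    (hC2 : ρ C2 < hgt C2 ∧ ∀ L' : L, L' < C2 → ρ L' = hgt L')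
    (hne : C1 ≠ C2) (hM : M ≤ C1 ⊔ C2) (hhgt : hgt M = hgt (C1 ⊔ C2) - 1) :
    ∃ C3 : L, (ρ C3 < hgt C3 ∧ ∀ L' : L, L' < C3 → ρ L' = hgt L') ∧ C3 ≤ M := by
  haveI : IsStronglyAtomic L := IsStronglyAtomic.of_wellFounded_lt wellFounded_lt
  -- hgt is monotone
  have mono : ∀ a b : L, a ≤ b → hgt a ≤ hgt b := by
    intro a b h
    have h1 := hbi a b h
    linarith [h1.1, h1.2]
  -- hgt is strictly monotone
  have strict : ∀ a b : L, a < b → hgt a + 1 ≤ hgt b := by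
    intro a b h
    obtain ⟨c, hc, hcb⟩ := h.exists_covby_le
    have h1 := hgt_cov a c hc
    have h2 := mono c b hcb
    omega
  -- the key "diamond" inequality, by induction on chains
  have J : ∀ (w : L) (n : ℕ) (x y : L), x ≤ y → (hgt y - hgt x).toNat = n →
      hgt (y ⊓ w) - hgt (x ⊓ w) ≤ hgt y - hgt x := by
    intro w n
    induction n with
    | zero =>
      intro x y hxy h0
      rcases eq_or_lt_of_le hxy with rfl | hlt
      · simp
      · have := strict x y hlt
        omega
    | succ n ih =>
      intro x y hxy h0
      rcases eq_or_lt_of_le hxy with rfl | hlt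
      · simp
      obtain ⟨c, hc, hcy⟩ := hlt.exists_covby_le
      have h1 : hgt c = hgt x + 1 := hgt_cov _ _ hc
      have hcyle : hgt c ≤ hgt y := mono _ _ hcy
      have ih' := ih c y hcy (by omega)
      have hmono : hgt (x ⊓ w) ≤ hgt (c ⊓ w) := mono _ _ (inf_le_inf_right w hc.le)
      have step : hgt (c ⊓ w) ≤ hgt (x ⊓ w) + 1 := by
        rcases hc.eq_or_eq (le_sup_left : x ≤ x ⊔ (c ⊓ w))
            (sup_le hc.le inf_le_left) with h | h
        · have hle : c ⊓ w ≤ x ⊓ w := le_inf (le_sup_right.trans h.le) inf_le_right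
          have := mono _ _ hle
          omega
        · have hcov : x ⊓ (c ⊓ w) ⋖ c ⊓ w :=
            inf_covBy_of_covBy_sup_left (by rw [h]; exact hc)
          have heq : x ⊓ (c ⊓ w) = x ⊓ w := by
            rw [← inf_assoc, inf_eq_left.mpr hc.le]
          rw [heq] at hcov
          have := hgt_cov _ _ hcov
          omega
      have hmono2 : hgt (y ⊓ w) ≥ hgt (c ⊓ w) := mono _ _ (inf_le_inf_right w hcy)
      omega
  -- apply it to C1, C2
  have hsupJ : hgt C1 - hgt (C1 ⊓ C2) ≤ hgt (C1 ⊔ C2) - hgt C2 := by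
    have h := J C1 _ C2 (C1 ⊔ C2) le_sup_right rfl
    rw [inf_eq_right.mpr (le_sup_left : C1 ≤ C1 ⊔ C2), inf_comm C2 C1] at h
    exact h
  -- ρ of the meet is full
  have hinf : ρ (C1 ⊓ C2) = hgt (C1 ⊓ C2) := by
    rcases lt_or_eq_of_le (inf_le_left : C1 ⊓ C2 ≤ C1) with h | h
    · exact hC1.2 _ h
    · have hle : C1 ≤ C2 := inf_eq_left.mp h
      have hlt : C1 ⊓ C2 < C2 := by rw [h]; exact lt_of_le_of_ne hle hne
      exact hC2.2 _ hlt
  -- rank of the join is at least 2 below its height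
  have hρJ : ρ (C1 ⊔ C2) ≤ hgt (C1 ⊔ C2) - 2 := by
    have hs := hsub C1 C2
    linarith [hC1.1, hC2.1, hinf, hsupJ]
  -- hence ρ M < hgt M
  have hρM : ρ M < hgt M := by
    have h1 := (hbi M (C1 ⊔ C2) hM).1
    omega
  -- take a minimal element below M with deficient rank
  classical
  set S : Finset L := Finset.univ.filter (fun x => x ≤ M ∧ ρ x < hgt x) with hS
  have hMS : M ∈ S := by simp [hS, hρM]
  obtain ⟨C3, hC3S, hmin⟩ : ∃ m ∈ S, ∀ x ∈ S, ¬x < m := by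
    obtain ⟨m, hm⟩ := Finset.exists_minimal (s := S) ⟨M, hMS⟩
    exact ⟨m, hm.prop, fun x hx hlt => hm.not_lt hx hlt⟩
  simp only [hS, Finset.mem_filter, Finset.mem_univ, true_and] at hC3S
  refine ⟨C3, ⟨hC3S.2, ?_⟩, hC3S.1⟩
  intro L' hL'
  have hle : ρ L' ≤ hgt L' := by
    have := (hbi ⊥ L' bot_le).2
    omega
  rcases lt_or_eq_of_le hle with hlt | h
  · exfalso
    have hL'S : L' ∈ S := by
      simp only [hS, Finset.mem_filter, Finset.mem_univ, true_and]
      exact ⟨hL'.le.trans hC3S.1, hlt⟩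
    exact hmin L' hL'S hL'
  · exact h
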